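/- Let M be a Hilbert C*-module with a Hilbert dual, f ∈ M' with ⟨f, f⟩' ≥ 1 and J_f = 0. Then the A-linear span M⁰_f = {m + f·a : m ∈ M, a ∈ A} equipped with the inner product ⟨m + f·a, m' + f·a'⟩₊ = ⟨m + f·a, m' + f·a'⟩' + a* c a' (where c = ⟨f, f⟩') is a complete Hilbert C*-module. -/

import Mathlib

open scoped RightActions

/-- The class `CStarModule` as it stood in Mathlib of December 2024 (a right Hilbert
`A`-module, `A` acting through `Aᵐᵒᵖ`); Mathlib's `CStarModule` is now a left module. -/
class RightCStarModule (A : outParam <| Type*) (E : Type*) [NonUnitalSemiring A] [StarRing A]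
    [Module ℂ A] [AddCommGroup E] [Module ℂ E] [PartialOrder A] [SMul Aᵐᵒᵖ E] [Norm A] [Norm E]
    extends Inner A E where
  inner_add_right {x} {y} {z} : inner x (y + z) = inner x y + inner x z
  inner_self_nonneg {x} : 0 ≤ inner x x
  inner_self {x} : inner x x = 0 ↔ x = 0
  inner_op_smul_right {a : A} {x y : E} : inner x (y <• a) = inner x y * a
  inner_smul_right_complex {z : ℂ} {x} {y} : inner x (z • y) = z • inner x y
  star_inner x y : star (inner x y) = inner y x
  norm_eq_sqrt_norm_inner_self x : ‖x‖ = √‖inner x x‖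

section Defs

variable {A : Type*} [CStarAlgebra A] [PartialOrder A] [StarOrderedRing A]
variable {E : Type*} [NormedAddCommGroup E] [NormedSpace ℂ E] [SMul Aᵐᵒᵖ E] [RightCStarModule A E]

/-- Membership in the dual module `M'`: a bounded `A`-antilinear functional on `E`
(the functional `f` plays the role of `m ↦ ⟨m, f⟩`). -/
def IsDualFunctional (f : E → A) : Prop :=
  (∀ x y, f (x + y) = f x + f y) ∧
  (∀ (c : ℂ) (x : E), f (c • x) = (starRingEnd ℂ) c • f x) ∧
  (∀ (x : E) (a : A), f (x <• a) = star a * f x) ∧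
  ∃ C : ℝ, ∀ x, ‖f x‖ ≤ C * ‖x‖

/-- The canonical image `m̂` of `m ∈ M` in the dual module: `m̂ x = ⟨x, m⟩`. -/
def mhat (m : E) : E → A := fun x => inner A x m

/-- The right action of `A` on dual functionals: `f·a`. -/
def dualAct (f : E → A) (a : A) : E → A := fun x => f x * a

/-- The right ideal `J_f = {a ∈ A : f·a ∈ M}`. -/
def Jf (f : E → A) : Set A := {a : A | ∃ m : E, dualAct f a = mhat m}

/-- The right ideal `J_f` is essential in `A`. -/
def JfEssential (f : E → A) : Prop := ∀ a : A, (∀ j ∈ Jf f, a * j = 0) → a = 0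

/-- The norm of a functional in the dual module (operator norm). -/
noncomputable def dualNorm (f : E → A) : ℝ :=
  sInf {C : ℝ | 0 ≤ C ∧ ∀ x, ‖f x‖ ≤ C * ‖x‖}

end Defs

section DualInner

variable {A : Type*} [CStarAlgebra A] [PartialOrder A] [StarOrderedRing A]
variable {E : Type*} [NormedAddCommGroup E] [NormedSpace ℂ E] [SMul Aᵐᵒᵖ E] [RightCStarModule A E]

/-- `inn` is an extension of the inner product of `M` to the dual module `M'`,
making `M'` a (complete) Hilbert C*-module; this is the meaning of
"`M` is a Hilbert C*-module with a Hilbert dual".  -/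
structure IsDualInner (inn : (E → A) → (E → A) → A) : Prop where
  extends_inner : ∀ m n : E, inn (mhat m) (mhat n) = inner A m n
  eval : ∀ f : E → A, IsDualFunctional f → ∀ m : E, f m = inn (mhat m) f
  add_right : ∀ f g h : E → A, inn f (g + h) = inn f g + inn f h
  act_right : ∀ (f g : E → A) (a : A), inn f (dualAct g a) = inn f g * a
  star_inn : ∀ f g : E → A, star (inn f g) = inn g f
  nonneg : ∀ f : E → A, IsDualFunctional f → 0 ≤ inn f f
  definite : ∀ f : E → A, IsDualFunctional f → inn f f = 0 → f = 0
  complete : ∀ u : ℕ → E → A, (∀ n, IsDualFunctional (u n)) →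
    (∀ ε : ℝ, 0 < ε → ∃ N, ∀ p q, N ≤ p → N ≤ q → ‖inn (u p - u q) (u p - u q)‖ < ε) →
    ∃ g : E → A, IsDualFunctional g ∧
      Filter.Tendsto (fun n => ‖inn (u n - g) (u n - g)‖) Filter.atTop (nhds 0)

end DualInner

section Plus

variable {A : Type*} [CStarAlgebra A] [PartialOrder A] [StarOrderedRing A]
variable {E : Type*} [NormedAddCommGroup E] [NormedSpace ℂ E] [SMul Aᵐᵒᵖ E] [RightCStarModule A E]

/-- Since `J_f = 0`, the `A`-linear span `M⁰_f = M ⊕ f·A` is parametrized by pairs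
`(m, a) ∈ M × A` (standing for `m + f·a`).  The perturbed inner product
`⟨m + f·a, m' + f·a'⟩₊ = ⟨m + f·a, m' + f·a'⟩' + a* c a'` with `c = ⟨f, f⟩'`. -/
noncomputable def innPlus (inn : (E → A) → (E → A) → A) (f : E → A) (x y : E × A) : A :=
  inn (mhat x.1 + dualAct f x.2) (mhat y.1 + dualAct f y.2) + star x.2 * inn f f * y.2

end Plus

section RCSAuxSec

variable {A : Type*} [CStarAlgebra A] [PartialOrder A] [StarOrderedRing A]
variable {E : Type*} [NormedAddCommGroup E] [NormedSpace ℂ E] [SMul Aᵐᵒᵖ E] [RightCStarModule A E]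

namespace RCSAux

lemma inner_add_left (x y z : E) : inner A (x + y) z = inner A x z + inner A y z := by
  rw [← RightCStarModule.star_inner, RightCStarModule.inner_add_right, star_add,
    RightCStarModule.star_inner, RightCStarModule.star_inner]

lemma inner_neg_right (x y : E) : inner A x (-y) = -inner A x y := by
  rw [← neg_one_smul ℂ y, RightCStarModule.inner_smul_right_complex, neg_one_smul]

lemma inner_sub_right (x y z : E) : inner A x (y - z) = inner A x y - inner A x z := by
  rw [sub_eq_add_neg, RightCStarModule.inner_add_right, inner_neg_right, sub_eq_add_neg]

lemma inner_sub_left (x y z : E) : inner A (x - y) z = inner A x z - inner A y z := by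
  rw [← RightCStarModule.star_inner, inner_sub_right, star_sub,
    RightCStarModule.star_inner, RightCStarModule.star_inner]

lemma inner_zero_left (y : E) : inner A (0 : E) y = 0 := by
  have h := inner_sub_left (A := A) (0 : E) 0 y
  rwa [sub_self, sub_self] at h

lemma inner_op_smul_left (a : A) (x y : E) : inner A (x <• a) y = star a * inner A x y := by
  rw [← RightCStarModule.star_inner, RightCStarModule.inner_op_smul_right, star_mul,
    RightCStarModule.star_inner]

lemma inner_smul_left_complex (c : ℂ) (x y : E) :
    inner A (c • x) y = star c • inner A x y := by
  rw [← RightCStarModule.star_inner, RightCStarModule.inner_smul_right_complex, star_smul,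
    RightCStarModule.star_inner]

lemma norm_sq_eq (x : E) : ‖x‖ ^ 2 = ‖inner A x x‖ := by
  rw [RightCStarModule.norm_eq_sqrt_norm_inner_self (A := A) x, Real.sq_sqrt (norm_nonneg _)]

lemma norm_inner_le (x y : E) : ‖inner A x y‖ ≤ ‖x‖ * ‖y‖ := by
  set a := inner A x y with ha
  set r : ℝ := ‖x‖ ^ 2 with hr
  rcases eq_or_lt_of_le (sq_nonneg ‖x‖) with h0 | h0
  · have hxx : inner A x x = 0 := by
      rw [← norm_eq_zero, ← norm_sq_eq]; exact h0.symm
    have hx : x = 0 := RightCStarModule.inner_self.mp hxx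
    rw [ha, hx, inner_zero_left, norm_zero]
    positivity
  · have hyx : inner A y x = star a := by rw [ha, RightCStarModule.star_inner]
    have hv := RightCStarModule.inner_self_nonneg (A := A) (x := x <• a - y <• (r • (1 : A)))
    simp only [inner_sub_left, inner_sub_right, inner_op_smul_left,
      RightCStarModule.inner_op_smul_right, hyx, ← ha] at hv
    have hX : inner A x x ≤ algebraMap ℝ A ‖inner A x x‖ :=
      IsSelfAdjoint.le_algebraMap_norm_self (RightCStarModule.star_inner x x)
    rw [← norm_sq_eq, ← hr, Algebra.algebraMap_eq_smul_one] at hX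
    have h1 := star_left_conjugate_le_conjugate hX a
    simp only [star_smul, star_one, star_trivial, smul_mul_assoc, mul_smul_comm, mul_one,
      one_mul, mul_assoc, sub_mul, mul_sub, smul_sub] at hv h1
    have h2 : r • (star a * a) ≤ r • (r • inner A y y) := by
      rw [← sub_nonneg]
      calc (0 : A) ≤ _ := hv
        _ ≤ r • (r • inner A y y) - r • (star a * a) := by
          rw [← sub_nonneg]
          have h3 := sub_nonneg.mpr h1
          convert h3 using 1
          abel
    rw [smul_le_smul_iff_of_pos_left h0] at h2
    have h4 := CStarAlgebra.norm_le_norm_of_nonneg_of_le (star_mul_self_nonneg a) h2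
    rw [CStarRing.norm_star_mul_self, norm_smul, Real.norm_eq_abs, abs_of_pos h0,
      ← norm_sq_eq] at h4
    refine (pow_le_pow_iff_left₀ (norm_nonneg a) (by positivity) two_ne_zero).mp ?_
    nlinarith

end RCSAux

end RCSAuxSec

section MyAux

variable {A : Type*} [CStarAlgebra A] [PartialOrder A] [StarOrderedRing A]
variable {E : Type*} [NormedAddCommGroup E] [NormedSpace ℂ E] [SMul Aᵐᵒᵖ E] [RightCStarModule A E]

namespace HilbertAux

/-! ### Basic algebraic lemmas about `mhat` and `dualAct` -/

lemma mhat_add (m n : E) : mhat (A := A) (m + n) = mhat m + mhat n := by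
  funext x; simp [mhat, RightCStarModule.inner_add_right]

lemma mhat_sub (m n : E) : mhat (A := A) (m - n) = mhat m - mhat n := by
  funext x; simp [mhat, RCSAux.inner_sub_right]

lemma mhat_smul_op (m : E) (a : A) : mhat (m <• a) = dualAct (mhat m) a := by
  funext x; simp [mhat, dualAct, RightCStarModule.inner_op_smul_right]

lemma dualAct_add (f : E → A) (a b : A) : dualAct f (a + b) = dualAct f a + dualAct f b := by
  funext x; simp [dualAct, mul_add]

lemma dualAct_sub (f : E → A) (a b : A) : dualAct f (a - b) = dualAct f a - dualAct f b := by
  funext x; simp [dualAct, mul_sub]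

lemma dualAct_mul (f : E → A) (a b : A) : dualAct f (a * b) = dualAct (dualAct f a) b := by
  funext x; simp [dualAct, mul_assoc]

lemma dualAct_addF (f g : E → A) (a : A) : dualAct (f + g) a = dualAct f a + dualAct g a := by
  funext x; simp [dualAct, add_mul]

lemma neg_eq_dualAct (f : E → A) : -f = dualAct f (-1) := by
  funext x; simp [dualAct]

lemma dualAct_zero (f : E → A) : dualAct f 0 = 0 := by
  funext x; simp [dualAct]

/-! ### Closure properties of `IsDualFunctional` -/

lemma isDual_mhat (m : E) : IsDualFunctional (mhat (A := A) m) := by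
  refine ⟨fun x y => ?_, fun c x => ?_, fun x a => ?_, ‖m‖, fun x => ?_⟩
  · simp [mhat, RCSAux.inner_add_left]
  · simp only [mhat, RCSAux.inner_smul_left_complex, starRingEnd_apply]
  · simp [mhat, RCSAux.inner_op_smul_left]
  · calc ‖(inner A x m : A)‖ ≤ ‖x‖ * ‖m‖ := RCSAux.norm_inner_le x m
      _ = ‖m‖ * ‖x‖ := mul_comm _ _

lemma isDual_add {f g : E → A} (hf : IsDualFunctional f) (hg : IsDualFunctional g) :
    IsDualFunctional (f + g) := by
  obtain ⟨f1, f2, f3, Cf, f4⟩ := hf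
  obtain ⟨g1, g2, g3, Cg, g4⟩ := hg
  refine ⟨fun x y => ?_, fun c x => ?_, fun x a => ?_, Cf + Cg, fun x => ?_⟩
  · simp only [Pi.add_apply, f1, g1]; abel
  · simp only [Pi.add_apply, f2, g2, smul_add]
  · simp only [Pi.add_apply, f3, g3, mul_add]
  · calc ‖f x + g x‖ ≤ ‖f x‖ + ‖g x‖ := norm_add_le _ _
      _ ≤ Cf * ‖x‖ + Cg * ‖x‖ := add_le_add (f4 x) (g4 x)
      _ = (Cf + Cg) * ‖x‖ := by ring

lemma isDual_dualAct {f : E → A} (hf : IsDualFunctional f) (a : A) :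
    IsDualFunctional (dualAct f a) := by
  obtain ⟨f1, f2, f3, Cf, f4⟩ := hf
  refine ⟨fun x y => ?_, fun c x => ?_, fun x b => ?_, Cf * ‖a‖, fun x => ?_⟩
  · simp [dualAct, f1, add_mul]
  · simp [dualAct, f2, smul_mul_assoc]
  · simp [dualAct, f3, mul_assoc]
  · calc ‖f x * a‖ ≤ ‖f x‖ * ‖a‖ := norm_mul_le _ _
      _ ≤ Cf * ‖x‖ * ‖a‖ := mul_le_mul_of_nonneg_right (f4 x) (norm_nonneg a)
      _ = Cf * ‖a‖ * ‖x‖ := by ring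

lemma isDual_sub {f g : E → A} (hf : IsDualFunctional f) (hg : IsDualFunctional g) :
    IsDualFunctional (f - g) := by
  have h : f - g = f + dualAct g (-1) := by
    rw [← neg_eq_dualAct, sub_eq_add_neg]
  rw [h]
  exact isDual_add hf (isDual_dualAct hg _)

/-! ### Lemmas about a dual inner product `inn` -/

variable {inn : (E → A) → (E → A) → A}

lemma inn_add_left (hinn : IsDualInner inn) (f g h : E → A) :
    inn (f + g) h = inn f h + inn g h := by
  calc inn (f + g) h = star (star (inn (f + g) h)) := (star_star _).symm
    _ = star (inn h (f + g)) := by rw [hinn.star_inn]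
    _ = star (inn h f + inn h g) := by rw [hinn.add_right]
    _ = inn f h + inn g h := by rw [star_add, hinn.star_inn, hinn.star_inn]

lemma inn_act_left (hinn : IsDualInner inn) (f g : E → A) (a : A) :
    inn (dualAct f a) g = star a * inn f g := by
  calc inn (dualAct f a) g = star (star (inn (dualAct f a) g)) := (star_star _).symm
    _ = star (inn g (dualAct f a)) := by rw [hinn.star_inn]
    _ = star (inn g f * a) := by rw [hinn.act_right]
    _ = star a * inn f g := by rw [star_mul, hinn.star_inn]

lemma inn_neg_right (hinn : IsDualInner inn) (g h : E → A) :
    inn g (-h) = -(inn g h) := by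
  rw [neg_eq_dualAct, hinn.act_right, mul_neg_one]

lemma inn_sub_right (hinn : IsDualInner inn) (g f₁ f₂ : E → A) :
    inn g (f₁ - f₂) = inn g f₁ - inn g f₂ := by
  rw [sub_eq_add_neg, hinn.add_right, inn_neg_right hinn, sub_eq_add_neg]

lemma inn_sub_left (hinn : IsDualInner inn) (f₁ f₂ g : E → A) :
    inn (f₁ - f₂) g = inn f₁ g - inn f₂ g := by
  calc inn (f₁ - f₂) g = star (star (inn (f₁ - f₂) g)) := (star_star _).symm
    _ = star (inn g (f₁ - f₂)) := by rw [hinn.star_inn]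
    _ = star (inn g f₁ - inn g f₂) := by rw [inn_sub_right hinn]
    _ = inn f₁ g - inn f₂ g := by rw [star_sub, hinn.star_inn, hinn.star_inn]

lemma isSelfAdjoint_inn (hinn : IsDualInner inn) (f : E → A) :
    IsSelfAdjoint (inn f f) := hinn.star_inn f f

/-- Cauchy–Schwarz inequality for the dual inner product. -/
lemma inn_cs (hinn : IsDualInner inn) {g h : E → A}
    (hg : IsDualFunctional g) (hh : IsDualFunctional h) :
    ‖inn g h‖ ^ 2 ≤ ‖inn g g‖ * ‖inn h h‖ := by
  set w := inn g h with hw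
  set b := star w * w with hb
  have hb0 : 0 ≤ b := star_mul_self_nonneg w
  have hbw : ‖b‖ = ‖w‖ ^ 2 := by rw [hb, CStarRing.norm_star_mul_self, sq]
  have key : ∀ t : ℝ, 0 ≤ t → (2 * t) • b ≤ (t ^ 2 * ‖inn g g‖) • b + inn h h := by
    intro t ht
    set a : A := t • w with ha
    have hsd : IsDualFunctional (dualAct g a - h) :=
      isDual_sub (isDual_dualAct hg a) hh
    have hpos : 0 ≤ inn (dualAct g a - h) (dualAct g a - h) := hinn.nonneg _ hsd
    have hexp : inn (dualAct g a - h) (dualAct g a - h) =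
        star a * inn g g * a - star a * w - star w * a + inn h h := by
      rw [inn_sub_left hinn, inn_sub_right hinn, inn_sub_right hinn]
      rw [hinn.act_right, hinn.act_right, inn_act_left hinn, inn_act_left hinn]
      rw [← hinn.star_inn g h, ← hw]
      abel
    have hsw : star a * w = t • b := by
      rw [ha, star_smul, star_trivial, smul_mul_assoc, ← hb]
    have hws : star w * a = t • b := by
      rw [ha, mul_smul_comm, ← hb]
    have hXa : star a * inn g g * a ≤ (t ^ 2 * ‖inn g g‖) • b := by
      have hX : inn g g ≤ algebraMap ℝ A ‖inn g g‖ :=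
        (isSelfAdjoint_inn hinn g).le_algebraMap_norm_self
      have h1 : star w * inn g g * w ≤ star w * algebraMap ℝ A ‖inn g g‖ * w :=
        star_left_conjugate_le_conjugate hX w
      have h2 : star w * algebraMap ℝ A ‖inn g g‖ * w = ‖inn g g‖ • b := by
        rw [Algebra.algebraMap_eq_smul_one, mul_smul_comm, mul_one, smul_mul_assoc, ← hb]
      rw [h2] at h1
      have h3 : star a * inn g g * a = (t * t) • (star w * inn g g * w) := by
        rw [ha, star_smul, star_trivial, smul_mul_assoc, smul_mul_assoc,
          mul_smul_comm, smul_smul]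
      rw [h3]
      calc (t * t) • (star w * inn g g * w) ≤ (t * t) • (‖inn g g‖ • b) := by
            rw [← sub_nonneg, ← smul_sub]
            exact smul_nonneg (mul_self_nonneg t) (sub_nonneg.mpr h1)
        _ = (t ^ 2 * ‖inn g g‖) • b := by
            rw [smul_smul, show t * t * ‖inn g g‖ = t ^ 2 * ‖inn g g‖ from by ring]
    have h5 : (2 * t) • b ≤ star a * inn g g * a + inn h h := by
      rw [← sub_nonneg]
      have he : star a * inn g g * a + inn h h - (2 * t) • b
          = inn (dualAct g a - h) (dualAct g a - h) := by
        rw [hexp, hsw, hws, show (2 : ℝ) * t = t + t from by ring, add_smul]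
        abel
      rw [he]
      exact hpos
    exact h5.trans (add_le_add_left hXa _)
  rcases eq_or_lt_of_le (norm_nonneg (inn g g)) with hn0 | hn0
  · have hkey : ∀ t : ℝ, 0 ≤ t → (2 * t) • b ≤ inn h h := by
      intro t ht
      have hk := key t ht
      rw [← hn0] at hk
      simpa using hk
    have hnb : ∀ t : ℝ, 0 ≤ t → 2 * t * ‖b‖ ≤ ‖inn h h‖ := by
      intro t ht
      have h1 := CStarAlgebra.norm_le_norm_of_nonneg_of_le
        (smul_nonneg (by positivity) hb0) (hkey t ht)
      rwa [norm_smul, Real.norm_eq_abs, abs_of_nonneg (by positivity)] at h1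
    have hbz : ‖b‖ = 0 := by
      by_contra hcon
      have hbpos : 0 < ‖b‖ := (norm_nonneg b).lt_of_ne (Ne.symm hcon)
      have h2 := hnb ((‖inn h h‖ + 1) / (2 * ‖b‖)) (by positivity)
      have hval : 2 * ((‖inn h h‖ + 1) / (2 * ‖b‖)) * ‖b‖ = ‖inn h h‖ + 1 := by
        field_simp
      rw [hval] at h2
      linarith
    rw [← hn0, zero_mul]
    calc ‖w‖ ^ 2 = ‖b‖ := hbw.symm
      _ ≤ 0 := hbz.le
  · have hkey := key (1 / ‖inn g g‖) (by positivity)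
    have e1 : (2 * (1 / ‖inn g g‖)) • b - ((1 / ‖inn g g‖) ^ 2 * ‖inn g g‖) • b
        = (1 / ‖inn g g‖) • b := by
      rw [← sub_smul]
      congr 1
      field_simp
      ring
    have h2 : (1 / ‖inn g g‖) • b ≤ inn h h := by
      rw [← e1]
      exact sub_le_iff_le_add'.mpr hkey
    have h3 := CStarAlgebra.norm_le_norm_of_nonneg_of_le
      (smul_nonneg (by positivity) hb0) h2
    rw [norm_smul, Real.norm_eq_abs, abs_of_nonneg (by positivity)] at h3
    have h4 := mul_le_mul_of_nonneg_left h3 hn0.le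
    rw [← mul_assoc, mul_one_div, div_self hn0.ne', one_mul] at h4
    calc ‖w‖ ^ 2 = ‖b‖ := hbw.symm
      _ ≤ ‖inn g g‖ * ‖inn h h‖ := h4

/-- Triangle inequality for the seminorm `g ↦ √‖inn g g‖`. -/
lemma inn_sqrt_add (hinn : IsDualInner inn) {g h : E → A}
    (hg : IsDualFunctional g) (hh : IsDualFunctional h) :
    Real.sqrt ‖inn (g + h) (g + h)‖ ≤ Real.sqrt ‖inn g g‖ + Real.sqrt ‖inn h h‖ := by
  have e : inn (g + h) (g + h) = inn g g + inn g h + (inn h g + inn h h) := by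
    rw [hinn.add_right, inn_add_left hinn, inn_add_left hinn]
    abel
  have hcs : ‖inn g h‖ ≤ Real.sqrt ‖inn g g‖ * Real.sqrt ‖inn h h‖ := by
    calc ‖inn g h‖ = Real.sqrt (‖inn g h‖ ^ 2) := (Real.sqrt_sq (norm_nonneg _)).symm
      _ ≤ Real.sqrt (‖inn g g‖ * ‖inn h h‖) := Real.sqrt_le_sqrt (inn_cs hinn hg hh)
      _ = _ := Real.sqrt_mul (norm_nonneg _) _
  have hhg : ‖inn h g‖ = ‖inn g h‖ := by rw [← hinn.star_inn g h, norm_star]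
  have hbound : ‖inn (g + h) (g + h)‖ ≤ (Real.sqrt ‖inn g g‖ + Real.sqrt ‖inn h h‖) ^ 2 := by
    rw [e]
    refine le_trans (norm_add_le _ _) ?_
    refine le_trans (add_le_add (norm_add_le _ _) (norm_add_le _ _)) ?_
    nlinarith [Real.sq_sqrt (norm_nonneg (inn g g)), Real.sq_sqrt (norm_nonneg (inn h h)),
      Real.sqrt_nonneg ‖inn g g‖, Real.sqrt_nonneg ‖inn h h‖, hcs, hhg]
  calc Real.sqrt ‖inn (g + h) (g + h)‖
      ≤ Real.sqrt ((Real.sqrt ‖inn g g‖ + Real.sqrt ‖inn h h‖) ^ 2) := Real.sqrt_le_sqrt hbound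
    _ = _ := Real.sqrt_sq (by positivity)

end HilbertAux

end MyAux

variable {A : Type*} [CStarAlgebra A] [PartialOrder A] [StarOrderedRing A]
variable {E : Type*} [NormedAddCommGroup E] [NormedSpace ℂ E] [SMul Aᵐᵒᵖ E] [RightCStarModule A E]

/-- Let `M` have a Hilbert dual, `f ∈ M'` with `⟨f, f⟩' ≥ 1` and `J_f = 0`.  Then
`M⁰_f = M ⊕ f·A` equipped with `⟨·,·⟩₊` is a (complete) Hilbert C*-module. -/
theorem innPlus_hilbert_complete [CompleteSpace E]
    (inn : (E → A) → (E → A) → A) (hinn : IsDualInner inn)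
    (f : E → A) (hf : IsDualFunctional f)
    (hf1 : (1 : A) ≤ inn f f) (hJ : Jf f = {0}) :
    (∀ x y z : E × A, innPlus inn f x (y + z) = innPlus inn f x y + innPlus inn f x z) ∧
    (∀ (x y : E × A) (b : A),
      innPlus inn f x (y.1 <• b, y.2 * b) = innPlus inn f x y * b) ∧
    (∀ x y : E × A, star (innPlus inn f x y) = innPlus inn f y x) ∧
    (∀ x : E × A, 0 ≤ innPlus inn f x x) ∧
    (∀ x : E × A, innPlus inn f x x = 0 → x = 0) ∧
    (∀ u : ℕ → E × A,
      (∀ ε : ℝ, 0 < ε → ∃ N, ∀ p q, N ≤ p → N ≤ q →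
        ‖innPlus inn f (u p - u q) (u p - u q)‖ < ε) →
      ∃ x : E × A, Filter.Tendsto (fun n => ‖innPlus inn f (u n - x) (u n - x)‖)
        Filter.atTop (nhds 0)) := by
  open HilbertAux in
  have hGd : ∀ x : E × A, IsDualFunctional (mhat x.1 + dualAct f x.2) :=
    fun x => isDual_add (isDual_mhat _) (isDual_dualAct hf _)
  refine ⟨?_, ?_, ?_, ?_, ?_, ?_⟩
  · -- additivity in the right variable
    intro x y z
    simp only [innPlus, Prod.fst_add, Prod.snd_add, mhat_add, dualAct_add]
    rw [show mhat y.1 + mhat z.1 + (dualAct f y.2 + dualAct f z.2)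
        = (mhat y.1 + dualAct f y.2) + (mhat z.1 + dualAct f z.2) from by abel,
      hinn.add_right, mul_add]
    abel
  · -- right A-action
    intro x y b
    simp only [innPlus]
    rw [show mhat (y.1 <• b) + dualAct f (y.2 * b)
        = dualAct (mhat y.1 + dualAct f y.2) b from by
          rw [mhat_smul_op, dualAct_mul, dualAct_addF],
      hinn.act_right, add_mul, mul_assoc (star x.2 * inn f f) y.2 b]
  · -- star symmetry
    intro x y
    simp only [innPlus, star_add, star_mul, star_star, hinn.star_inn, mul_assoc]
  · -- nonnegativity
    intro x
    exact add_nonneg (hinn.nonneg _ (hGd x)) (star_left_conjugate_nonneg (hinn.nonneg f hf) x.2)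
  · -- definiteness
    intro x hx
    simp only [innPlus] at hx
    have h1 : 0 ≤ inn (mhat x.1 + dualAct f x.2) (mhat x.1 + dualAct f x.2) :=
      hinn.nonneg _ (hGd x)
    have h2 : 0 ≤ star x.2 * inn f f * x.2 := star_left_conjugate_nonneg (hinn.nonneg f hf) x.2
    have hG0 : inn (mhat x.1 + dualAct f x.2) (mhat x.1 + dualAct f x.2) = 0 :=
      le_antisymm ((le_add_of_nonneg_right h2).trans_eq hx) h1
    have ht0 : star x.2 * inn f f * x.2 = 0 :=
      le_antisymm ((le_add_of_nonneg_left h1).trans_eq hx) h2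
    have hx2 : x.2 = 0 := by
      have hle : star x.2 * x.2 ≤ star x.2 * inn f f * x.2 := by
        simpa using star_left_conjugate_le_conjugate hf1 x.2
      have hz : star x.2 * x.2 = 0 :=
        le_antisymm (hle.trans_eq ht0) (star_mul_self_nonneg x.2)
      exact (CStarRing.star_mul_self_eq_zero_iff x.2).mp hz
    have hx1 : x.1 = 0 := by
      rw [hx2, dualAct_zero, add_zero, hinn.extends_inner] at hG0
      exact RightCStarModule.inner_self.mp hG0
    exact Prod.ext hx1 hx2
  · -- completeness
    intro u hu
    have hb2 : ∀ x : E × A, ‖x.2‖ ^ 2 ≤ ‖innPlus inn f x x‖ := by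
      intro x
      have h1 : star x.2 * x.2 ≤ star x.2 * inn f f * x.2 := by
        simpa using star_left_conjugate_le_conjugate hf1 x.2
      have h2 : star x.2 * inn f f * x.2 ≤ innPlus inn f x x :=
        le_add_of_nonneg_left (hinn.nonneg _ (hGd x))
      have h3 := CStarAlgebra.norm_le_norm_of_nonneg_of_le
        (star_mul_self_nonneg x.2) (h1.trans h2)
      calc ‖x.2‖ ^ 2 = ‖star x.2 * x.2‖ := by rw [CStarRing.norm_star_mul_self, sq]
        _ ≤ _ := h3
    have hbG : ∀ x : E × A,
        ‖inn (mhat x.1 + dualAct f x.2) (mhat x.1 + dualAct f x.2)‖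
          ≤ ‖innPlus inn f x x‖ := by
      intro x
      exact CStarAlgebra.norm_le_norm_of_nonneg_of_le (hinn.nonneg _ (hGd x))
        (le_add_of_nonneg_right (star_left_conjugate_nonneg (hinn.nonneg f hf) x.2))
    have hkA : ∀ a : A, inn (dualAct f a) (dualAct f a) = star a * inn f f * a := by
      intro a; rw [hinn.act_right, inn_act_left hinn]
    have hkn : ∀ a : A, ‖inn (dualAct f a) (dualAct f a)‖ ≤ ‖inn f f‖ * ‖a‖ ^ 2 := by
      intro a
      rw [hkA]
      calc ‖star a * inn f f * a‖ ≤ ‖star a * inn f f‖ * ‖a‖ := norm_mul_le _ _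
        _ ≤ ‖star a‖ * ‖inn f f‖ * ‖a‖ :=
            mul_le_mul_of_nonneg_right (norm_mul_le _ _) (norm_nonneg _)
        _ = ‖inn f f‖ * ‖a‖ ^ 2 := by rw [norm_star]; ring
    have hks : ∀ a : A, Real.sqrt ‖inn (dualAct f a) (dualAct f a)‖
        ≤ Real.sqrt ‖inn f f‖ * ‖a‖ := by
      intro a
      calc Real.sqrt ‖inn (dualAct f a) (dualAct f a)‖
          ≤ Real.sqrt (‖inn f f‖ * ‖a‖ ^ 2) := Real.sqrt_le_sqrt (hkn a)
        _ = Real.sqrt ‖inn f f‖ * ‖a‖ := by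
            rw [Real.sqrt_mul (norm_nonneg _), Real.sqrt_sq (norm_nonneg _)]
    have hmn : ∀ m : E, ‖inn (mhat (A := A) m) (mhat m)‖ = ‖m‖ ^ 2 := by
      intro m; rw [hinn.extends_inner, ← RCSAux.norm_sq_eq]
    have hb1 : ∀ x : E × A,
        ‖x.1‖ ≤ Real.sqrt ‖innPlus inn f x x‖ + Real.sqrt ‖inn f f‖ * ‖x.2‖ := by
      intro x
      have hsplit : mhat (A := A) x.1 = (mhat x.1 + dualAct f x.2) + dualAct f (-x.2) := by
        rw [add_assoc, ← dualAct_add, add_neg_cancel, dualAct_zero, add_zero]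
      have h1 : ‖x.1‖ = Real.sqrt ‖inn (mhat x.1) (mhat x.1)‖ := by
        rw [hmn, Real.sqrt_sq (norm_nonneg _)]
      rw [h1, hsplit]
      refine (inn_sqrt_add hinn (hGd x) (isDual_dualAct hf _)).trans ?_
      refine add_le_add (Real.sqrt_le_sqrt (hbG x)) ?_
      refine (hks _).trans ?_
      rw [norm_neg]
    have hc2 : CauchySeq fun n => (u n).2 := by
      rw [Metric.cauchySeq_iff]
      intro ε hε
      obtain ⟨N, hN⟩ := hu (ε ^ 2) (by positivity)
      refine ⟨N, fun p hp q hq => ?_⟩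
      have h1 : ‖(u p - u q).2‖ ^ 2 < ε ^ 2 := lt_of_le_of_lt (hb2 _) (hN p q hp hq)
      rw [dist_eq_norm, show (u p).2 - (u q).2 = (u p - u q).2 from rfl]
      nlinarith [norm_nonneg (u p - u q).2, hε]
    have hc1 : CauchySeq fun n => (u n).1 := by
      rw [Metric.cauchySeq_iff]
      intro ε hε
      have hKpos : (0 : ℝ) < 1 + Real.sqrt ‖inn f f‖ := by positivity
      obtain ⟨N, hN⟩ := hu ((ε / (1 + Real.sqrt ‖inn f f‖)) ^ 2) (by positivity)
      refine ⟨N, fun p hp q hq => ?_⟩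
      have hs1 : Real.sqrt ‖innPlus inn f (u p - u q) (u p - u q)‖
          < ε / (1 + Real.sqrt ‖inn f f‖) := by
        have h := Real.sqrt_lt_sqrt (norm_nonneg _) (hN p q hp hq)
        rwa [Real.sqrt_sq (by positivity)] at h
      have hd2 : ‖(u p - u q).2‖
          ≤ Real.sqrt ‖innPlus inn f (u p - u q) (u p - u q)‖ := by
        have h := Real.sqrt_le_sqrt (hb2 (u p - u q))
        rwa [Real.sqrt_sq (norm_nonneg _)] at h
      have hd1 := hb1 (u p - u q)
      rw [dist_eq_norm, show (u p).1 - (u q).1 = (u p - u q).1 from rfl]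
      have hsq : (0 : ℝ) ≤ Real.sqrt ‖inn f f‖ := Real.sqrt_nonneg _
      have hfinal : ‖(u p - u q).1‖
          ≤ (1 + Real.sqrt ‖inn f f‖) * Real.sqrt ‖innPlus inn f (u p - u q) (u p - u q)‖ := by
        calc ‖(u p - u q).1‖
            ≤ Real.sqrt ‖innPlus inn f (u p - u q) (u p - u q)‖
              + Real.sqrt ‖inn f f‖ * ‖(u p - u q).2‖ := hd1
          _ ≤ Real.sqrt ‖innPlus inn f (u p - u q) (u p - u q)‖
              + Real.sqrt ‖inn f f‖ * Real.sqrt ‖innPlus inn f (u p - u q) (u p - u q)‖ := by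
              exact add_le_add_right (mul_le_mul_of_nonneg_left hd2 hsq) _
          _ = _ := by ring
      calc ‖(u p - u q).1‖
          ≤ (1 + Real.sqrt ‖inn f f‖)
            * Real.sqrt ‖innPlus inn f (u p - u q) (u p - u q)‖ := hfinal
        _ < (1 + Real.sqrt ‖inn f f‖) * (ε / (1 + Real.sqrt ‖inn f f‖)) :=
            mul_lt_mul_of_pos_left hs1 hKpos
        _ = ε := by field_simp
    obtain ⟨m, hm⟩ := cauchySeq_tendsto_of_complete hc1
    obtain ⟨a, ha⟩ := cauchySeq_tendsto_of_complete hc2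
    refine ⟨(m, a), ?_⟩
    have hbound : ∀ n, ‖innPlus inn f (u n - (m, a)) (u n - (m, a))‖
        ≤ (‖(u n).1 - m‖ + Real.sqrt ‖inn f f‖ * ‖(u n).2 - a‖) ^ 2
          + ‖inn f f‖ * ‖(u n).2 - a‖ ^ 2 := by
      intro n
      have hd1 : (u n - (m, a)).1 = (u n).1 - m := rfl
      have hd2 : (u n - (m, a)).2 = (u n).2 - a := rfl
      have e1 : ‖innPlus inn f (u n - (m, a)) (u n - (m, a))‖
          ≤ ‖inn (mhat (u n - (m, a)).1 + dualAct f (u n - (m, a)).2)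
              (mhat (u n - (m, a)).1 + dualAct f (u n - (m, a)).2)‖
            + ‖star (u n - (m, a)).2 * inn f f * (u n - (m, a)).2‖ := norm_add_le _ _
      have e2 : ‖inn (mhat (u n - (m, a)).1 + dualAct f (u n - (m, a)).2)
            (mhat (u n - (m, a)).1 + dualAct f (u n - (m, a)).2)‖
          ≤ (‖(u n).1 - m‖ + Real.sqrt ‖inn f f‖ * ‖(u n).2 - a‖) ^ 2 := by
        have t1 := inn_sqrt_add hinn (isDual_mhat (u n - (m, a)).1)
          (isDual_dualAct hf (u n - (m, a)).2)
        have t2 : Real.sqrt ‖inn (mhat (u n - (m, a)).1) (mhat (u n - (m, a)).1)‖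
            = ‖(u n).1 - m‖ := by rw [hmn, hd1, Real.sqrt_sq (norm_nonneg _)]
        have t3 := hks (u n - (m, a)).2
        rw [hd2] at t3
        have t4 : Real.sqrt ‖inn (mhat (u n - (m, a)).1 + dualAct f (u n - (m, a)).2)
              (mhat (u n - (m, a)).1 + dualAct f (u n - (m, a)).2)‖
            ≤ ‖(u n).1 - m‖ + Real.sqrt ‖inn f f‖ * ‖(u n).2 - a‖ := by
          rw [← t2]
          exact t1.trans (add_le_add_right t3 _)
        have t5 := Real.sq_sqrt (norm_nonneg (inn
          (mhat (u n - (m, a)).1 + dualAct f (u n - (m, a)).2)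
          (mhat (u n - (m, a)).1 + dualAct f (u n - (m, a)).2)))
        nlinarith [Real.sqrt_nonneg ‖inn
          (mhat (u n - (m, a)).1 + dualAct f (u n - (m, a)).2)
          (mhat (u n - (m, a)).1 + dualAct f (u n - (m, a)).2)‖,
          norm_nonneg ((u n).1 - m), norm_nonneg ((u n).2 - a),
          Real.sqrt_nonneg ‖inn f f‖]
      have e3 : ‖star (u n - (m, a)).2 * inn f f * (u n - (m, a)).2‖
          ≤ ‖inn f f‖ * ‖(u n).2 - a‖ ^ 2 := by
        rw [← hkA]
        exact hkn _
      calc ‖innPlus inn f (u n - (m, a)) (u n - (m, a))‖ ≤ _ := e1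
        _ ≤ _ := add_le_add e2 e3
    have t1 : Filter.Tendsto (fun n => ‖(u n).1 - m‖) Filter.atTop (nhds 0) :=
      tendsto_iff_norm_sub_tendsto_zero.mp hm
    have t2 : Filter.Tendsto (fun n => ‖(u n).2 - a‖) Filter.atTop (nhds 0) :=
      tendsto_iff_norm_sub_tendsto_zero.mp ha
    have tR : Filter.Tendsto (fun n =>
        (‖(u n).1 - m‖ + Real.sqrt ‖inn f f‖ * ‖(u n).2 - a‖) ^ 2
          + ‖inn f f‖ * ‖(u n).2 - a‖ ^ 2) Filter.atTop (nhds 0) := by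
      have h := ((t1.add (t2.const_mul (Real.sqrt ‖inn f f‖))).pow 2).add
        ((t2.pow 2).const_mul ‖inn f f‖)
      simpa using h
    exact squeeze_zero (fun n => norm_nonneg _) hbound tR
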